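/- Let E be a complex Banach space and P : E → E a continuous linear map with P ∘ P = id. Then for every real δ with 0 < δ < 2, exp( (1/2)·ln(δ(2−δ))·id + (1/2)·ln(δ/(2−δ))·P ) = id + (δ−1)·P. (This is the identity expressing the transfer-matrix factor 1 + (δ−1)P as the exponential of a local Hamiltonian term.) -/

import Mathlib

/-!
STATEMENT 9: Let E be a complex Banach space and P : E → E a continuous linear map with
P ∘ P = id. Then for every real δ with 0 < δ < 2,
exp( (1/2)·ln(δ(2−δ))·id + (1/2)·ln(δ/(2−δ))·P ) = id + (δ−1)·P.
-/

set_option maxHeartbeats 1000000 in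
/-- Exponential of a scalar multiple of an idempotent. -/
lemma exp_smul_idem {A : Type*} [NormedRing A] [NormedAlgebra ℂ A] [CompleteSpace A]
    (Q : A) (hQ : Q * Q = Q) (t : ℂ) :
    NormedSpace.exp (t • Q) = 1 + (Complex.exp t - 1) • Q := by
  have hQpow : ∀ n : ℕ, Q ^ (n + 1) = Q := by
    intro n
    induction n with
    | zero => simp
    | succ n ih => rw [pow_succ, ih, hQ]
  have hf : Summable fun n : ℕ => ((n.factorial : ℂ))⁻¹ • (t • Q) ^ n :=
    NormedSpace.expSeries_summable' (𝕂 := ℂ) (t • Q)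
  have hg : Summable fun n : ℕ => ((n.factorial : ℂ))⁻¹ • t ^ n :=
    NormedSpace.expSeries_summable' (𝕂 := ℂ) t
  have hg' : Summable fun n : ℕ => (((n + 1).factorial : ℂ))⁻¹ • t ^ (n + 1) :=
    (summable_nat_add_iff 1).2 hg
  have hterm : ∀ n : ℕ, (((n + 1).factorial : ℂ))⁻¹ • (t • Q) ^ (n + 1)
      = ((((n + 1).factorial : ℂ))⁻¹ • t ^ (n + 1)) • Q := by
    intro n
    rw [smul_pow, hQpow, smul_smul, smul_eq_mul]
  have h1 : ∑' n : ℕ, (((n + 1).factorial : ℂ))⁻¹ • (t • Q) ^ (n + 1)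
      = (∑' n : ℕ, (((n + 1).factorial : ℂ))⁻¹ • t ^ (n + 1)) • Q := by
    rw [tsum_congr hterm]
    exact Summable.tsum_smul_const hg' Q
  have h2 : ∑' n : ℕ, (((n + 1).factorial : ℂ))⁻¹ • t ^ (n + 1) = Complex.exp t - 1 := by
    have h3 := Summable.tsum_eq_zero_add hg
    have hexp : Complex.exp t = ∑' n : ℕ, ((n.factorial : ℂ))⁻¹ • t ^ n := by
      rw [Complex.exp_eq_exp_ℂ, NormedSpace.exp_eq_tsum ℂ]
    rw [hexp, h3]
    simp
  simp only [NormedSpace.exp_eq_tsum ℂ]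
  rw [Summable.tsum_eq_zero_add hf, h1, h2]
  simp

theorem exp_of_involution_eq_one_add_smul
    (E : Type*) [NormedAddCommGroup E] [NormedSpace ℂ E] [CompleteSpace E]
    (P : E →L[ℂ] E) (hP : P ∘L P = ContinuousLinearMap.id ℂ E)
    (δ : ℝ) (h0 : 0 < δ) (h2 : δ < 2) :
    NormedSpace.exp
        ((((1 : ℝ) / 2 * Real.log (δ * (2 - δ)) : ℝ) : ℂ) • ContinuousLinearMap.id ℂ E +
          (((1 : ℝ) / 2 * Real.log (δ / (2 - δ)) : ℝ) : ℂ) • P) =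
      ContinuousLinearMap.id ℂ E + ((δ : ℂ) - 1) • P := by
  have h2δ : (0 : ℝ) < 2 - δ := by linarith
  have hP' : P * P = 1 := hP
  have hid : (ContinuousLinearMap.id ℂ E) = (1 : E →L[ℂ] E) := rfl
  set a : ℂ := (((1 : ℝ) / 2 * Real.log (δ * (2 - δ)) : ℝ) : ℂ) with ha
  set b : ℂ := (((1 : ℝ) / 2 * Real.log (δ / (2 - δ)) : ℝ) : ℂ) with hb
  -- the two idempotents
  set Q : E →L[ℂ] E := (2 : ℂ)⁻¹ • (1 + P) with hQdef
  set R : E →L[ℂ] E := (2 : ℂ)⁻¹ • (1 - P) with hRdef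
  have hQmul : (1 + P) * (1 + P) = (2 : ℂ) • (1 + P) := by
    rw [two_smul, mul_add, mul_one, add_mul, one_mul, hP']
    abel
  have hRmul : (1 - P) * (1 - P) = (2 : ℂ) • (1 - P) := by
    rw [two_smul, mul_sub, mul_one, sub_mul, one_mul, hP']
    abel
  have hQRmul : (1 + P) * (1 - P) = 0 := by
    rw [mul_sub, mul_one, add_mul, one_mul, hP']
    abel
  have hRQmul : (1 - P) * (1 + P) = 0 := by
    rw [mul_add, mul_one, sub_mul, one_mul, hP']
    abel
  have hQ : Q * Q = Q := by
    rw [hQdef, smul_mul_smul_comm, hQmul, smul_smul,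
      show ((2:ℂ)⁻¹ * 2⁻¹ * 2) = (2:ℂ)⁻¹ by norm_num]
  have hR : R * R = R := by
    rw [hRdef, smul_mul_smul_comm, hRmul, smul_smul,
      show ((2:ℂ)⁻¹ * 2⁻¹ * 2) = (2:ℂ)⁻¹ by norm_num]
  have hQR : Q * R = 0 := by
    rw [hQdef, hRdef, smul_mul_smul_comm, hQRmul, smul_zero]
  have hRQ : R * Q = 0 := by
    rw [hQdef, hRdef, smul_mul_smul_comm, hRQmul, smul_zero]
  have hcomm : Commute ((a + b) • Q) ((a - b) • R) := by
    apply Commute.smul_left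
    apply Commute.smul_right
    unfold Commute SemiconjBy
    rw [hQR, hRQ]
  -- rewrite the argument of exp
  have hX : a • (1 : E →L[ℂ] E) + b • P = (a + b) • Q + (a - b) • R := by
    rw [hQdef, hRdef]
    module
  -- scalar identities
  have hlog1 : (1 : ℝ) / 2 * Real.log (δ * (2 - δ)) + 1 / 2 * Real.log (δ / (2 - δ))
      = Real.log δ := by
    rw [Real.log_mul h0.ne' h2δ.ne', Real.log_div h0.ne' h2δ.ne']
    ring
  have hlog2 : (1 : ℝ) / 2 * Real.log (δ * (2 - δ)) - 1 / 2 * Real.log (δ / (2 - δ))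
      = Real.log (2 - δ) := by
    rw [Real.log_mul h0.ne' h2δ.ne', Real.log_div h0.ne' h2δ.ne']
    ring
  have hab1 : a + b = ((Real.log δ : ℝ) : ℂ) := by
    rw [ha, hb, ← Complex.ofReal_add, hlog1]
  have hab2 : a - b = ((Real.log (2 - δ) : ℝ) : ℂ) := by
    rw [ha, hb, ← Complex.ofReal_sub, hlog2]
  have he1 : Complex.exp ((Real.log δ : ℝ) : ℂ) = (δ : ℂ) := by
    rw [← Complex.ofReal_exp, Real.exp_log h0]
  have he2 : Complex.exp ((Real.log (2 - δ) : ℝ) : ℂ) = ((2 - δ : ℝ) : ℂ) := by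
    rw [← Complex.ofReal_exp, Real.exp_log h2δ]
  let +nondep : NormedAlgebra ℚ (E →L[ℂ] E) := .restrictScalars ℚ ℂ (E →L[ℂ] E)
  rw [hid, hX, NormedSpace.exp_add_of_commute hcomm, exp_smul_idem Q hQ, exp_smul_idem R hR,
    hab1, hab2, he1, he2]
  have hprod : ∀ c d : ℂ, (1 + c • Q) * (1 + d • R) = 1 + c • Q + d • R := by
    intro c d
    rw [mul_add, mul_one, add_mul, one_mul, smul_mul_smul_comm, hQR, smul_zero]
    abel
  rw [hprod]
  rw [hQdef, hRdef]
  have hc : ((2 - δ : ℝ) : ℂ) = 2 - (δ : ℂ) := by push_cast; ring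
  rw [hc]
  module
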